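/- Let Φ ∈ ℝ^{m×n} and S ⊆ {1,…,n} with δ_{|S|} < 1. Then for every u ∈ ℝ^{|S|}, ‖u‖₂/(1+δ_{|S|}) ≤ ‖(Φ_S' Φ_S)^{-1} u‖₂ ≤ ‖u‖₂/(1−δ_{|S|}). -/

import Mathlib

open Finset Matrix

/-- Squared-entries `ℓ₂` norm of a finite real vector. -/
noncomputable def l2 {ι : Type*} [Fintype ι] (x : ι → ℝ) : ℝ :=
  Real.sqrt (∑ i, x i ^ 2)

/-- A vector is `K`-sparse if it has at most `K` nonzero entries. -/
def Ksparse {n : ℕ} (K : ℕ) (x : Fin n → ℝ) : Prop :=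
  (Finset.univ.filter (fun i => x i ≠ 0)).card ≤ K

/-- `δ` is a valid restricted isometry constant of order `K` for `Φ`. -/
def RIP {m n : ℕ} (Φ : Matrix (Fin m) (Fin n) ℝ) (K : ℕ) (δ : ℝ) : Prop :=
  ∀ x : Fin n → ℝ, Ksparse K x →
    (1 - δ) * ∑ i, x i ^ 2 ≤ ∑ i, (Φ.mulVec x) i ^ 2 ∧
    ∑ i, (Φ.mulVec x) i ^ 2 ≤ (1 + δ) * ∑ i, x i ^ 2

/-- Column submatrix `Φ_S`. -/
def colSub {m n : ℕ} (Φ : Matrix (Fin m) (Fin n) ℝ) (S : Finset (Fin n)) :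
    Matrix (Fin m) S ℝ := fun r c => Φ r c

/-- Gram matrix `Φ_S' Φ_S`. -/
noncomputable def gram {m n : ℕ} (Φ : Matrix (Fin m) (Fin n) ℝ) (S : Finset (Fin n)) :
    Matrix S S ℝ := (colSub Φ S)ᵀ * colSub Φ S

/-- Pseudoinverse `Φ_S^† = (Φ_S'Φ_S)⁻¹ Φ_S'` (for `Φ_S` of full column rank). -/
noncomputable def pinv {m n : ℕ} (Φ : Matrix (Fin m) (Fin n) ℝ) (S : Finset (Fin n)) :
    Matrix S (Fin m) ℝ := (gram Φ S)⁻¹ * (colSub Φ S)ᵀ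

/-- Projection `P_S = Φ_S Φ_S^†` onto the span of the columns of `Φ_S`. -/
noncomputable def proj {m n : ℕ} (Φ : Matrix (Fin m) (Fin n) ℝ) (S : Finset (Fin n)) :
    Matrix (Fin m) (Fin m) ℝ := colSub Φ S * pinv Φ S

/-- Projection `P_S^⊥ = I - P_S`. -/
noncomputable def projPerp {m n : ℕ} (Φ : Matrix (Fin m) (Fin n) ℝ) (S : Finset (Fin n)) :
    Matrix (Fin m) (Fin m) ℝ := 1 - proj Φ S

/-- Consequence of RIP: `‖u‖/(1+δ) ≤ ‖(Φ_S'Φ_S)⁻¹ u‖ ≤ ‖u‖/(1-δ)`. -/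

-- ===== auxiliary lemmas =====

lemma dot_self_nonneg' {k : Type*} [Fintype k] (x : k → ℝ) : 0 ≤ x ⬝ᵥ x :=
  Finset.sum_nonneg fun i _ => mul_self_nonneg (x i)

lemma dot_self_eq_sum_sq {k : Type*} [Fintype k] (x : k → ℝ) : x ⬝ᵥ x = ∑ c, x c ^ 2 := by
  simp [dotProduct, sq]

lemma dot_self_zero {k : Type*} [Fintype k] (x : k → ℝ) (h : x ⬝ᵥ x = 0) : x = 0 := by
  funext i
  have := Finset.sum_eq_zero_iff_of_nonneg (fun j _ => mul_self_nonneg (x j)) |>.mp h i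
    (Finset.mem_univ i)
  simpa [mul_self_eq_zero] using this

lemma l2_eq_norm {ι : Type*} [Fintype ι] (x : ι → ℝ) :
    l2 x = ‖(WithLp.equiv 2 (ι → ℝ)).symm x‖ := by
  rw [l2, EuclideanSpace.norm_eq]
  simp [Real.norm_eq_abs, sq_abs]

lemma l2_nonneg {ι : Type*} [Fintype ι] (x : ι → ℝ) : 0 ≤ l2 x := Real.sqrt_nonneg _

lemma l2_triangle {ι : Type*} [Fintype ι] (x y : ι → ℝ) : l2 (x + y) ≤ l2 x + l2 y := by
  rw [l2_eq_norm, l2_eq_norm, l2_eq_norm]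
  exact norm_add_le ((WithLp.equiv 2 (ι → ℝ)).symm x) ((WithLp.equiv 2 (ι → ℝ)).symm y)

lemma l2_dot_self {k : Type*} [Fintype k] (x : k → ℝ) : l2 x ^ 2 = x ⬝ᵥ x := by
  rw [l2, dot_self_eq_sum_sq, Real.sq_sqrt]
  exact Finset.sum_nonneg fun i _ => sq_nonneg _

/-- Extension of a vector on `S` to `Fin n` by zero. -/
def extS {n : ℕ} (S : Finset (Fin n)) (x : S → ℝ) : Fin n → ℝ :=
  fun i => if h : i ∈ S then x ⟨i, h⟩ else 0

lemma extS_sparse {n : ℕ} (S : Finset (Fin n)) (x : S → ℝ) : Ksparse S.card (extS S x) := by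
  apply Finset.card_le_card
  rw [Finset.subset_iff]
  intro i hi
  rw [Finset.mem_filter] at hi
  by_contra h
  exact hi.2 (by simp [extS, h])

lemma sum_extS_sq {n : ℕ} (S : Finset (Fin n)) (x : S → ℝ) :
    ∑ i, (extS S x) i ^ 2 = ∑ c, x c ^ 2 := by
  rw [← Finset.sum_filter_add_sum_filter_not Finset.univ (fun i => i ∈ S)]
  have h2 : ∑ i ∈ Finset.univ.filter (fun i => ¬ i ∈ S), (extS S x) i ^ 2 = 0 := by
    apply Finset.sum_eq_zero; intro i hi
    simp only [mem_filter] at hi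
    simp [extS, hi.2]
  rw [h2, add_zero]
  have : Finset.univ.filter (fun i => i ∈ S) = S := by ext i; simp
  rw [this, ← Finset.sum_attach S (fun i => (extS S x) i ^ 2)]
  apply Finset.sum_congr rfl
  intro c _
  simp [extS, c.2]

lemma mulVec_extS {m n : ℕ} (Φ : Matrix (Fin m) (Fin n) ℝ) (S : Finset (Fin n)) (x : S → ℝ) :
    Φ.mulVec (extS S x) = (colSub Φ S).mulVec x := by
  funext r
  show ∑ i, Φ r i * extS S x i = ∑ c, colSub Φ S r c * x c
  rw [← Finset.sum_filter_add_sum_filter_not Finset.univ (fun i => i ∈ S)]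
  have h2 : ∑ i ∈ Finset.univ.filter (fun i => ¬ i ∈ S), Φ r i * extS S x i = 0 := by
    apply Finset.sum_eq_zero; intro i hi
    simp only [mem_filter] at hi
    simp [extS, hi.2]
  rw [h2, add_zero]
  have : Finset.univ.filter (fun i => i ∈ S) = S := by ext i; simp
  rw [this, ← Finset.sum_attach S (fun i => Φ r i * extS S x i)]
  apply Finset.sum_congr rfl
  intro c _
  simp [extS, colSub, c.2]

lemma gram_quad {m n : ℕ} (Φ : Matrix (Fin m) (Fin n) ℝ) (S : Finset (Fin n)) (x : S → ℝ) :
    (gram Φ S).mulVec x ⬝ᵥ x = ∑ i, ((colSub Φ S).mulVec x) i ^ 2 := by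
  have h : (gram Φ S).mulVec x = (colSub Φ S)ᵀ.mulVec ((colSub Φ S).mulVec x) := by
    rw [mulVec_mulVec]; rfl
  rw [h, dotProduct_comm, dotProduct_mulVec, vecMul_transpose]
  simp [dotProduct, sq]

lemma gram_quad_bounds {m n : ℕ} (Φ : Matrix (Fin m) (Fin n) ℝ) (S : Finset (Fin n))
    (δ : ℝ) (hRIP : RIP Φ S.card δ) (x : S → ℝ) :
    (1 - δ) * (x ⬝ᵥ x) ≤ (gram Φ S).mulVec x ⬝ᵥ x ∧
    (gram Φ S).mulVec x ⬝ᵥ x ≤ (1 + δ) * (x ⬝ᵥ x) := by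
  have h := hRIP (extS S x) (extS_sparse S x)
  rw [sum_extS_sq, mulVec_extS] at h
  rw [gram_quad, dot_self_eq_sum_sq]
  exact h

lemma gram_symm {m n : ℕ} (Φ : Matrix (Fin m) (Fin n) ℝ) (S : Finset (Fin n)) :
    (gram Φ S)ᵀ = gram Φ S := by
  simp [_root_.gram, Matrix.transpose_mul]

lemma symm_op_bound {k : Type*} [Fintype k] (M : Matrix k k ℝ) (hM : Mᵀ = M)
    (δ : ℝ) (hδ : 0 ≤ δ) (hq : ∀ x : k → ℝ, |M.mulVec x ⬝ᵥ x| ≤ δ * (x ⬝ᵥ x)) (x : k → ℝ) :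
    M.mulVec x ⬝ᵥ M.mulVec x ≤ δ ^ 2 * (x ⬝ᵥ x) := by
  have hsymm : ∀ a b : k → ℝ, M.mulVec a ⬝ᵥ b = a ⬝ᵥ M.mulVec b := by
    intro a b
    rw [dotProduct_mulVec a M b, ← hM, vecMul_transpose, hM]
  have hbil : ∀ a b : k → ℝ, M.mulVec a ⬝ᵥ b ≤ δ * (a ⬝ᵥ a + b ⬝ᵥ b) / 2 := by
    intro a b
    have e1 : M.mulVec (a + b) ⬝ᵥ (a + b) - M.mulVec (a - b) ⬝ᵥ (a - b)
        = 4 * (M.mulVec a ⬝ᵥ b) := by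
      simp only [mulVec_add, mulVec_sub, add_dotProduct, sub_dotProduct, dotProduct_add,
        dotProduct_sub]
      rw [hsymm b a, dotProduct_comm b (M.mulVec a)]
      ring
    have h1 := (abs_le.mp (hq (a + b))).2
    have h2 := (abs_le.mp (hq (a - b))).1
    have e2 : (a + b) ⬝ᵥ (a + b) + (a - b) ⬝ᵥ (a - b) = 2 * (a ⬝ᵥ a + b ⬝ᵥ b) := by
      simp only [add_dotProduct, sub_dotProduct, dotProduct_add, dotProduct_sub,
        dotProduct_comm b a]
      ring
    nlinarith
  set a := x ⬝ᵥ x with ha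
  set b := M.mulVec x ⬝ᵥ M.mulVec x with hb
  have ha0 : 0 ≤ a := dot_self_nonneg' x
  have hb0 : 0 ≤ b := dot_self_nonneg' _
  rcases eq_or_lt_of_le ha0 with ha0' | hapos
  · have hx0 : x = 0 := dot_self_zero x ha0'.symm
    subst hx0
    rw [hb, ← ha0']
    simp
  rcases eq_or_lt_of_le hb0 with hb0' | hbpos
  · rw [← hb0']; positivity
  · have key := hbil (Real.sqrt b • x) (Real.sqrt a • M.mulVec x)
    rw [mulVec_smul] at key
    simp only [smul_dotProduct, dotProduct_smul, smul_eq_mul] at key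
    rw [← hb, ← ha] at key
    have sa := Real.sq_sqrt ha0
    have sb := Real.sq_sqrt hb0
    have sap : 0 < Real.sqrt a := Real.sqrt_pos.mpr hapos
    have sbp : 0 < Real.sqrt b := Real.sqrt_pos.mpr hbpos
    have sa' : Real.sqrt a * Real.sqrt a = a := Real.mul_self_sqrt ha0
    have sb' : Real.sqrt b * Real.sqrt b = b := Real.mul_self_sqrt hb0
    have key2 : Real.sqrt a * Real.sqrt b * b ≤ δ * a * b := by
      have h1 : Real.sqrt b * (Real.sqrt b * a) = b * a := by
        rw [← mul_assoc, sb']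
      have h2 : Real.sqrt a * (Real.sqrt a * b) = a * b := by
        rw [← mul_assoc, sa']
      rw [h1, h2] at key
      calc Real.sqrt a * Real.sqrt b * b = Real.sqrt a * (Real.sqrt b * b) := by ring
        _ ≤ δ * (b * a + a * b) / 2 := key
        _ = δ * a * b := by ring
    have hstep : Real.sqrt b ≤ δ * Real.sqrt a := by
      have hpos : 0 < Real.sqrt a * b := mul_pos sap hbpos
      rw [← mul_le_mul_iff_left₀ hpos]
      calc Real.sqrt b * (Real.sqrt a * b) = Real.sqrt a * Real.sqrt b * b := by ring
        _ ≤ δ * a * b := key2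
        _ = δ * Real.sqrt a * (Real.sqrt a * b) := by linear_combination δ * b * sa'.symm
    calc b = Real.sqrt b ^ 2 := sb.symm
      _ ≤ (δ * Real.sqrt a) ^ 2 := by
          apply pow_le_pow_left₀ sbp.le hstep
      _ = δ ^ 2 * a := by rw [mul_pow, sa]

lemma gram_mulVec_l2_bounds {m n : ℕ} (Φ : Matrix (Fin m) (Fin n) ℝ) (S : Finset (Fin n))
    (δ : ℝ) (hδ0 : 0 ≤ δ) (hRIP : RIP Φ S.card δ) (x : S → ℝ) :
    (1 - δ) * l2 x ≤ l2 ((gram Φ S).mulVec x) ∧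
    l2 ((gram Φ S).mulVec x) ≤ (1 + δ) * l2 x := by
  set G := gram Φ S with hG
  set M := G - 1 with hMdef
  have hMsymm : Mᵀ = M := by
    rw [hMdef, Matrix.transpose_sub, Matrix.transpose_one, hG, gram_symm]
  have hMq : ∀ y : S → ℝ, |M.mulVec y ⬝ᵥ y| ≤ δ * (y ⬝ᵥ y) := by
    intro y
    have hb := gram_quad_bounds Φ S δ hRIP y
    have hMy : M.mulVec y = G.mulVec y - y := by
      rw [hMdef, sub_mulVec, one_mulVec]
    rw [hMy, sub_dotProduct, abs_le]
    constructor <;> nlinarith [hb.1, hb.2]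
  have hMx := symm_op_bound M hMsymm δ hδ0 hMq x
  have hMl2 : l2 (M.mulVec x) ≤ δ * l2 x := by
    have h1 : l2 (M.mulVec x) ^ 2 ≤ (δ * l2 x) ^ 2 := by
      rw [l2_dot_self, mul_pow, l2_dot_self]
      exact hMx
    have h2 : 0 ≤ δ * l2 x := mul_nonneg hδ0 (l2_nonneg x)
    calc l2 (M.mulVec x) = Real.sqrt (l2 (M.mulVec x) ^ 2) := (Real.sqrt_sq (l2_nonneg _)).symm
      _ ≤ Real.sqrt ((δ * l2 x) ^ 2) := Real.sqrt_le_sqrt h1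
      _ = δ * l2 x := Real.sqrt_sq h2
  have hGx : G.mulVec x = x + M.mulVec x := by
    rw [hMdef, sub_mulVec, one_mulVec]
    abel
  constructor
  · have htri : l2 x ≤ l2 (G.mulVec x) + l2 (M.mulVec x) := by
      have : x = G.mulVec x + (-(M.mulVec x)) := by rw [hGx]; abel
      calc l2 x = l2 (G.mulVec x + (-(M.mulVec x))) := by rw [← this]
        _ ≤ l2 (G.mulVec x) + l2 (-(M.mulVec x)) := l2_triangle _ _
        _ = l2 (G.mulVec x) + l2 (M.mulVec x) := by
            congr 1
            simp [l2]
    nlinarith [hMl2, htri]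
  · calc l2 (G.mulVec x) = l2 (x + M.mulVec x) := by rw [hGx]
      _ ≤ l2 x + l2 (M.mulVec x) := l2_triangle _ _
      _ ≤ l2 x + δ * l2 x := by linarith [hMl2]
      _ = (1 + δ) * l2 x := by ring

theorem gram_inv_norm_bounds {m n : ℕ} (Φ : Matrix (Fin m) (Fin n) ℝ) (S : Finset (Fin n))
    (δ : ℝ) (hδ0 : 0 ≤ δ) (hδ1 : δ < 1) (hRIP : RIP Φ S.card δ) (u : S → ℝ) :
    l2 u / (1 + δ) ≤ l2 ((gram Φ S)⁻¹.mulVec u) ∧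
    l2 ((gram Φ S)⁻¹.mulVec u) ≤ l2 u / (1 - δ) := by
  have h1δ : (0:ℝ) < 1 - δ := by linarith
  have h1δ' : (0:ℝ) < 1 + δ := by linarith
  -- positive definiteness, hence invertibility
  have hpd : (gram Φ S).PosDef := by
    refine Matrix.PosDef.of_dotProduct_mulVec_pos ?_ ?_
    · rw [Matrix.IsHermitian]
      ext i j
      rw [Matrix.conjTranspose_apply]
      rw [show gram Φ S j i = (gram Φ S)ᵀ i j from rfl, gram_symm]
      simp
    · intro x hx
      have hb := (gram_quad_bounds Φ S δ hRIP x).1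
      have hxx : 0 < x ⬝ᵥ x := by
        rcases eq_or_lt_of_le (dot_self_nonneg' x) with h | h
        · exact absurd (dot_self_zero x h.symm) hx
        · exact h
      have : 0 < (gram Φ S).mulVec x ⬝ᵥ x := lt_of_lt_of_le (by nlinarith) hb
      rw [dotProduct_comm] at this
      simpa using this
  have hdet : IsUnit (gram Φ S).det := hpd.det_pos.ne'.isUnit
  set v := (gram Φ S)⁻¹.mulVec u with hv
  have hGv : (gram Φ S).mulVec v = u := by
    rw [hv, mulVec_mulVec, Matrix.mul_nonsing_inv _ hdet, one_mulVec]
  have hbd := gram_mulVec_l2_bounds Φ S δ hδ0 hRIP v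
  rw [hGv] at hbd
  constructor
  · rw [div_le_iff₀ h1δ']
    calc l2 u ≤ (1 + δ) * l2 v := hbd.2
      _ = l2 v * (1 + δ) := by ring
  · rw [le_div_iff₀ h1δ]
    calc l2 v * (1 - δ) = (1 - δ) * l2 v := by ring
      _ ≤ l2 u := hbd.1
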